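/- For any fixed constant K > 0, the function f(d) = ln(1 + K·(e^d - 1)/(e^d + 1)) is concave on [0, ∞). -/

import Mathlib

open Real Set

private lemma concave_log_comp {s : Set ℝ} {h : ℝ → ℝ} (hc : ConcaveOn ℝ s h)
    (hpos : ∀ x ∈ s, 0 < h x) : ConcaveOn ℝ s (fun x => Real.log (h x)) := by
  refine ⟨hc.1, fun x hx y hy a b ha hb hab => ?_⟩
  have hx' := hpos x hx
  have hy' := hpos y hy
  have hmem := hc.1 hx hy ha hb hab
  have hcomb : (0:ℝ) < a * h x + b * h y := by
    rcases ha.lt_or_eq with ha' | ha'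
    · have : 0 < a * h x := mul_pos ha' hx'
      nlinarith [mul_nonneg hb hy'.le]
    · have hb1 : b = 1 := by linarith
      simp [← ha', hb1, hy']
  calc a • Real.log (h x) + b • Real.log (h y)
      ≤ Real.log (a * h x + b * h y) :=
        strictConcaveOn_log_Ioi.concaveOn.2 (mem_Ioi.2 hx') (mem_Ioi.2 hy') ha hb hab
    _ ≤ Real.log (h (a • x + b • y)) := by
        apply Real.log_le_log hcomb
        simpa using hc.2 hx hy ha hb hab

private lemma tanh_concave :
    ConcaveOn ℝ (Set.Ici (0:ℝ)) (fun d => (Real.exp d - 1) / (Real.exp d + 1)) := by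
  have hne : ∀ d : ℝ, Real.exp d + 1 ≠ 0 := fun d => by positivity
  apply concaveOn_of_hasDerivWithinAt2_nonpos (convex_Ici 0)
    (f' := fun d => (Real.exp d * (Real.exp d + 1) - (Real.exp d - 1) * Real.exp d) /
      (Real.exp d + 1) ^ 2)
    (f'' := fun d => ((Real.exp d * (Real.exp d + 1) + Real.exp d * Real.exp d
        - ((Real.exp d - 1) * Real.exp d + Real.exp d * Real.exp d)) * (Real.exp d + 1) ^ 2
        - (Real.exp d * (Real.exp d + 1) - (Real.exp d - 1) * Real.exp d)
          * (2 * (Real.exp d + 1) * Real.exp d)) / ((Real.exp d + 1) ^ 2) ^ 2)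
  · exact (Real.continuous_exp.sub continuous_const).continuousOn.div
      (Real.continuous_exp.add continuous_const).continuousOn (fun x _ => hne x)
  · intro x _
    exact (((Real.hasDerivAt_exp x).sub_const 1).div
      ((Real.hasDerivAt_exp x).add_const 1) (hne x)).hasDerivWithinAt
  · intro x _
    have h1 : HasDerivAt (fun d => Real.exp d * (Real.exp d + 1) - (Real.exp d - 1) * Real.exp d)
        (Real.exp x * (Real.exp x + 1) + Real.exp x * Real.exp x
          - ((Real.exp x - 1) * Real.exp x + Real.exp x * Real.exp x)) x := by
      have := ((Real.hasDerivAt_exp x).mul ((Real.hasDerivAt_exp x).add_const 1)).sub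
        (((Real.hasDerivAt_exp x).sub_const 1).mul (Real.hasDerivAt_exp x))
      exact this.congr_deriv (by ring)
    have h2 : HasDerivAt (fun d => (Real.exp d + 1) ^ 2)
        (2 * (Real.exp x + 1) * Real.exp x) x := by
      have := ((Real.hasDerivAt_exp x).add_const 1).pow 2
      exact this.congr_deriv (by norm_num)
    have h3 : ((Real.exp x + 1) ^ 2) ≠ 0 := by positivity
    exact (h1.div h2 h3).hasDerivWithinAt
  · intro x hx
    rw [interior_Ici] at hx
    have hx1 : (1:ℝ) ≤ Real.exp x := Real.one_le_exp (le_of_lt hx)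
    have he : 0 < Real.exp x := Real.exp_pos x
    apply div_nonpos_of_nonpos_of_nonneg
    · nlinarith
    · positivity

theorem log_one_add_tanh_concave (K : ℝ) (hK : 0 < K) :
    ConcaveOn ℝ (Set.Ici (0 : ℝ))
      (fun d => Real.log (1 + K * ((Real.exp d - 1) / (Real.exp d + 1)))) := by
  have hconc : ConcaveOn ℝ (Set.Ici (0:ℝ))
      (fun d => 1 + K * ((Real.exp d - 1) / (Real.exp d + 1))) := by
    have := (tanh_concave.smul hK.le).add_const 1
    exact this.congr (fun d _ => by simp only [Pi.add_apply, smul_eq_mul]; ring)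
  apply concave_log_comp hconc
  intro x hx
  have hx1 : (1:ℝ) ≤ Real.exp x := Real.one_le_exp hx
  have hnum : 0 ≤ (Real.exp x - 1) / (Real.exp x + 1) := by
    apply div_nonneg <;> nlinarith
  nlinarith [mul_nonneg hK.le hnum]
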